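/- Let (K, v) be a complete discrete valued field of characteristic p > 0 with residue field k satisfying [k : k^p] = p^n for some integer n ≥ 0. Then [K : K^p] = p^{n+1}. -/

import Mathlib

open IsLocalRing Finset

section aux
variable {p : ℕ} [Fact p.Prime] {O : Type} [CommRing O] [IsDomain O] [IsDiscreteValuationRing O]
  {ι : Type} [Fintype ι] {π : O}

lemma smod_iff_dvd (hπ : Irreducible π) (n : ℕ) (x y : O) :
    x ≡ y [SMOD ((maximalIdeal O) ^ n • ⊤ : Submodule O O)] ↔ π ^ n ∣ x - y := by
  rw [SModEq.sub_mem]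
  simp [← Ideal.one_eq_top, smul_eq_mul, mul_one, hπ.maximalIdeal_eq,
    Ideal.span_singleton_pow, Ideal.mem_span_singleton]

lemma residue_dvd_iff (hπ : Irreducible π) (x : O) :
    residue O x = 0 ↔ π ∣ x := by
  rw [residue_eq_zero_iff, hπ.maximalIdeal_eq, Ideal.mem_span_singleton]

variable [CharP O p] (u : ι → O)

omit [Fact (Nat.Prime p)] [CharP O p] in
lemma li_step (hπ : Irreducible π)
    (H1 : ∀ w : ι → ResidueField O, ∑ j, (w j) ^ p * residue O (u j) = 0 → ∀ j, w j = 0)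
    (a : Fin p → ι → O) (ha : ∑ i, ∑ j, (a i j) ^ p * π ^ (i : ℕ) * u j = 0) :
    ∀ i j, π ∣ a i j := by
  have hπ0 : π ≠ 0 := hπ.ne_zero
  set s : Fin p → O := fun i => ∑ j, a i j ^ p * u j with hs
  have ha' : ∑ i : Fin p, π ^ (i : ℕ) * s i = 0 := by
    rw [← ha]; refine Finset.sum_congr rfl fun i _ => ?_
    rw [hs, Finset.mul_sum]; refine Finset.sum_congr rfl fun j _ => by ring
  suffices H : ∀ m : ℕ, ∀ i : Fin p, (i : ℕ) = m → ∀ j, π ∣ a i j by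
    exact fun i j => H i.val i rfl j
  intro m
  induction m using Nat.strong_induction_on with
  | _ m IH =>
    rintro i rfl j
    have hdvd : π ^ ((i : ℕ) + 1) ∣ π ^ (i : ℕ) * s i := by
      have : π ^ (i : ℕ) * s i = -∑ i' ∈ univ.erase i, π ^ (i' : ℕ) * s i' := by
        rw [eq_neg_iff_add_eq_zero, Finset.add_sum_erase univ (fun i' : Fin p => π ^ (i' : ℕ) * s i') (mem_univ i)]
        exact ha'
      rw [this, dvd_neg]
      refine Finset.dvd_sum fun i' hi' => ?_
      rcases lt_or_gt_of_ne (Finset.ne_of_mem_erase hi') with hlt | hgt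
      · -- i' < i : use IH, π^p divides s i'
        have hp' : π ^ p ∣ s i' := by
          refine Finset.dvd_sum fun j' _ => Dvd.dvd.mul_right ?_ _
          exact pow_dvd_pow_of_dvd (IH (i' : ℕ) hlt i' rfl j') p
        exact Dvd.dvd.mul_left
          ((pow_dvd_pow π (by omega : (i : ℕ) + 1 ≤ p)).trans hp') _
      · exact Dvd.dvd.mul_right (pow_dvd_pow π (Nat.succ_le_of_lt (by exact_mod_cast hgt))) _
    obtain ⟨z, hz⟩ := hdvd
    have hsi : s i = π * z := by
      rw [pow_succ, mul_assoc] at hz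
      exact mul_left_cancel₀ (pow_ne_zero _ hπ0) hz
    have hres : ∀ j', residue O (a i j') = 0 := by
      refine H1 _ ?_
      have := congrArg (residue O) hsi
      rw [hs] at this
      simpa [map_sum, (residue_dvd_iff hπ π).mpr dvd_rfl] using this
    exact (residue_dvd_iff hπ _).mp (hres j)
end aux

section aux2
variable {p : ℕ} [Fact p.Prime] {O : Type} [CommRing O] [IsDomain O] [IsDiscreteValuationRing O]
  {ι : Type} [Fintype ι] {π : O} (u : ι → O)

omit [Fact (Nat.Prime p)] in
lemma li_zero (hp : 0 < p) (hπ : Irreducible π)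
    (H1 : ∀ w : ι → ResidueField O, ∑ j, (w j) ^ p * residue O (u j) = 0 → ∀ j, w j = 0) :
    ∀ a : Fin p → ι → O, (∑ i, ∑ j, (a i j) ^ p * π ^ (i : ℕ) * u j = 0) →
    ∀ i j, a i j = 0 := by
  have hπ0 : π ≠ 0 := hπ.ne_zero
  have key : ∀ N : ℕ, ∀ a : Fin p → ι → O,
      (∑ i, ∑ j, (a i j) ^ p * π ^ (i : ℕ) * u j = 0) → ∀ i j, π ^ N ∣ a i j := by
    intro N
    induction N with
    | zero => intro a _ i j; simpa using one_dvd _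
    | succ N IH =>
      intro a ha i j
      have hstep := li_step u hπ H1 a ha
      set a' : Fin p → ι → O := fun i j => (hstep i j).choose with ha'def
      have ha' : ∀ i j, a i j = π * a' i j := fun i j => (hstep i j).choose_spec
      have hsum : ∑ i, ∑ j, (a' i j) ^ p * π ^ (i : ℕ) * u j = 0 := by
        have : π ^ p * ∑ i, ∑ j, (a' i j) ^ p * π ^ (i : ℕ) * u j = 0 := by
          rw [← ha, Finset.mul_sum]
          refine Finset.sum_congr rfl fun i _ => ?_
          rw [Finset.mul_sum]
          refine Finset.sum_congr rfl fun j' _ => ?_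
          rw [ha' i j', mul_pow]; ring
        rcases mul_eq_zero.mp this with h | h
        · exact absurd h (pow_ne_zero _ hπ0)
        · exact h
      obtain ⟨z, hz⟩ := IH a' hsum i j
      exact ⟨z, by rw [ha' i j, hz, pow_succ]; ring⟩
  intro a ha i j
  refine (inferInstance : IsHausdorff (maximalIdeal O) O).haus (a i j) fun N => ?_
  rw [smod_iff_dvd hπ, sub_zero]
  exact key N a ha i j
end aux2

section aux3
variable {p : ℕ} [Fact p.Prime] {O : Type} [CommRing O] [IsDomain O] [IsDiscreteValuationRing O]
  {ι : Type} [Fintype ι] {π : O} (u : ι → O)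

omit [Fact (Nat.Prime p)] in
lemma span_step (hπ : Irreducible π)
    (H2 : ∀ x : ResidueField O, ∃ w : ι → ResidueField O,
      x = ∑ j, (w j) ^ p * residue O (u j)) (x : O) :
    ∃ (w : ι → O) (y : O), x = ∑ j, (w j) ^ p * u j + π * y := by
  obtain ⟨w', hw'⟩ := H2 (residue O x)
  choose w hw using fun j => residue_surjective (R := O) (w' j)
  have : residue O (x - ∑ j, (w j) ^ p * u j) = 0 := by
    rw [map_sub, map_sum, hw']
    simp [hw]
  obtain ⟨y, hy⟩ := (residue_dvd_iff hπ _).mp this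
  exact ⟨w, y, by rw [← hy]; ring⟩

omit [Fact (Nat.Prime p)] in
lemma span_block (hπ : Irreducible π)
    (H2 : ∀ x : ResidueField O, ∃ w : ι → ResidueField O,
      x = ∑ j, (w j) ^ p * residue O (u j)) (x : O) :
    ∃ (a : Fin p → ι → O) (y : O),
      x = ∑ i, ∑ j, (a i j) ^ p * π ^ (i : ℕ) * u j + π ^ p * y := by
  suffices H : ∀ r : ℕ, ∀ x : O, ∃ (a : ℕ → ι → O) (y : O),
      x = ∑ m ∈ Finset.range r, ∑ j, (a m j) ^ p * π ^ m * u j + π ^ r * y by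
    obtain ⟨a, y, hay⟩ := H p x
    refine ⟨fun i j => a i j, y, ?_⟩
    rw [hay, Finset.sum_range fun m => ∑ j, (a m j) ^ p * π ^ m * u j]
  intro r
  induction r with
  | zero => intro x; exact ⟨fun _ _ => 0, x, by simp⟩
  | succ r IH =>
    intro x
    obtain ⟨a, y, hay⟩ := IH x
    obtain ⟨w, y', hw⟩ := span_step u hπ H2 y
    refine ⟨fun m j => if m = r then w j else a m j, y', ?_⟩
    rw [Finset.sum_range_succ]
    have hne : ∀ m ∈ Finset.range r, (∑ j, ((if m = r then w j else a m j)) ^ p * π ^ m * u j)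
        = ∑ j, (a m j) ^ p * π ^ m * u j := by
      intro m hm
      refine Finset.sum_congr rfl fun j _ => ?_
      rw [if_neg (Finset.mem_range.mp hm).ne]
    rw [Finset.sum_congr rfl hne]
    have hr : (∑ j, ((if r = r then w j else a r j)) ^ p * π ^ r * u j)
        = ∑ j, (w j) ^ p * π ^ r * u j :=
      Finset.sum_congr rfl fun j _ => by rw [if_pos rfl]
    rw [hr, hay, hw, mul_add, Finset.mul_sum, pow_succ]
    ring_nf
end aux3

section aux4
variable {p : ℕ} [Fact p.Prime] {O : Type} [CommRing O] [IsDomain O] [IsDiscreteValuationRing O]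
  [CharP O p] [IsAdicComplete (IsLocalRing.maximalIdeal O) O]
  {ι : Type} [Fintype ι] {π : O} (u : ι → O)

lemma span_all (hπ : Irreducible π)
    (H2 : ∀ x : ResidueField O, ∃ w : ι → ResidueField O,
      x = ∑ j, (w j) ^ p * residue O (u j)) (x : O) :
    ∃ L : Fin p → ι → O, x = ∑ i, ∑ j, (L i j) ^ p * π ^ (i : ℕ) * u j := by
  classical
  have hp1 : 1 ≤ p := (Fact.out : p.Prime).one_lt.le
  have hst : ∀ y : O, ∃ aY : (Fin p → ι → O) × O,
      y = ∑ i, ∑ j, (aY.1 i j) ^ p * π ^ (i : ℕ) * u j + π ^ p * aY.2 := fun y => by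
    obtain ⟨a, z, hh⟩ := span_block u hπ H2 y; exact ⟨⟨a, z⟩, hh⟩
  choose st hst using hst
  set g : ℕ → O := fun m => (fun y => (st y).2)^[m] x with hgdef
  set d : ℕ → Fin p → ι → O := fun m => (st (g m)).1 with hddef
  have hgs : ∀ m, g (m + 1) = (st (g m)).2 := fun m => Function.iterate_succ_apply' _ _ _
  have hC : ∀ N, x = ∑ m ∈ Finset.range N,
      π ^ (p * m) * (∑ i, ∑ j, (d m i j) ^ p * π ^ (i : ℕ) * u j) + π ^ (p * N) * g N := by
    intro N
    induction N with
    | zero => simp [hgdef]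
    | succ N IH =>
      rw [Finset.sum_range_succ]
      have h2 : g N = ∑ i, ∑ j, (d N i j) ^ p * π ^ (i : ℕ) * u j + π ^ p * g (N + 1) := by
        rw [hgs N, hddef]
        exact hst (g N)
      rw [IH, h2, mul_add, ← mul_assoc (π ^ (p * N)), mul_comm (π ^ (p * N)) (π ^ p),
        ← pow_add, ← add_assoc, show p + p * N = p * (N + 1) by ring]
  set A : ℕ → Fin p → ι → O := fun N i j => ∑ m ∈ Finset.range N, d m i j * π ^ m with hAdef
  have hcauchy : ∀ i j, ∀ {M N : ℕ}, M ≤ N →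
      A M i j ≡ A N i j [SMOD ((maximalIdeal O) ^ M • ⊤ : Submodule O O)] := by
    intro i j M N hMN
    rw [smod_iff_dvd hπ]
    have : A M i j - A N i j = -∑ m ∈ Finset.Ico M N, d m i j * π ^ m := by
      rw [hAdef]
      simp only
      rw [← Finset.sum_range_add_sum_Ico _ hMN]
      ring
    rw [this, dvd_neg]
    exact Finset.dvd_sum fun m hm =>
      Dvd.dvd.mul_left (pow_dvd_pow π (Finset.mem_Ico.mp hm).1) _
  have hex : ∀ i j, ∃ L, ∀ N, A N i j ≡ L [SMOD ((maximalIdeal O) ^ N • ⊤ : Submodule O O)] :=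
    fun i j => IsPrecomplete.prec inferInstance (fun {M N} h => hcauchy i j h)
  choose L hL using hex
  refine ⟨L, ?_⟩
  have hswap : ∀ N, ∑ m ∈ Finset.range N,
      π ^ (p * m) * (∑ i, ∑ j, (d m i j) ^ p * π ^ (i : ℕ) * u j)
      = ∑ i, ∑ j, (A N i j) ^ p * π ^ (i : ℕ) * u j := by
    intro N
    have h1 : ∀ i j, (A N i j) ^ p = ∑ m ∈ Finset.range N, (d m i j) ^ p * π ^ (p * m) := by
      intro i j
      rw [hAdef]
      simp only
      rw [sum_pow_char]
      exact Finset.sum_congr rfl fun m _ => by rw [mul_pow, ← pow_mul, mul_comm m p]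
    calc ∑ m ∈ Finset.range N, π ^ (p * m) * (∑ i, ∑ j, (d m i j) ^ p * π ^ (i : ℕ) * u j)
        = ∑ m ∈ Finset.range N, ∑ i, ∑ j, (d m i j) ^ p * π ^ (p * m) * π ^ (i : ℕ) * u j := by
          refine Finset.sum_congr rfl fun m _ => ?_
          rw [Finset.mul_sum]
          refine Finset.sum_congr rfl fun i _ => ?_
          rw [Finset.mul_sum]
          exact Finset.sum_congr rfl fun j _ => by ring
      _ = ∑ i, ∑ m ∈ Finset.range N, ∑ j, (d m i j) ^ p * π ^ (p * m) * π ^ (i : ℕ) * u j :=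
          Finset.sum_comm
      _ = ∑ i, ∑ j, ∑ m ∈ Finset.range N, (d m i j) ^ p * π ^ (p * m) * π ^ (i : ℕ) * u j := by
          exact Finset.sum_congr rfl fun i _ => Finset.sum_comm
      _ = ∑ i, ∑ j, (A N i j) ^ p * π ^ (i : ℕ) * u j := by
          refine Finset.sum_congr rfl fun i _ => Finset.sum_congr rfl fun j _ => ?_
          rw [h1 i j, Finset.sum_mul, Finset.sum_mul]
  have key : ∀ N, π ^ N ∣ x - ∑ i, ∑ j, (L i j) ^ p * π ^ (i : ℕ) * u j := by
    intro N
    have hxa : x - ∑ i, ∑ j, (A N i j) ^ p * π ^ (i : ℕ) * u j = π ^ (p * N) * g N := by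
      rw [hC N, hswap N]; ring
    have h2 : π ^ N ∣ x - ∑ i, ∑ j, (A N i j) ^ p * π ^ (i : ℕ) * u j := by
      rw [hxa]
      exact Dvd.dvd.mul_right (pow_dvd_pow π (Nat.le_mul_of_pos_left N hp1)) _
    have h3 : π ^ N ∣ ∑ i, ∑ j, (A N i j) ^ p * π ^ (i : ℕ) * u j
        - ∑ i, ∑ j, (L i j) ^ p * π ^ (i : ℕ) * u j := by
      rw [← Finset.sum_sub_distrib]
      refine Finset.dvd_sum fun i _ => ?_
      rw [← Finset.sum_sub_distrib]
      refine Finset.dvd_sum fun j _ => ?_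
      have : (A N i j) ^ p * π ^ (i : ℕ) * u j - (L i j) ^ p * π ^ (i : ℕ) * u j
          = ((A N i j - L i j) ^ p) * (π ^ (i : ℕ) * u j) := by
        rw [sub_pow_char]; ring
      rw [this]
      have hd : π ^ N ∣ A N i j - L i j := by
        have := hL i j N
        rwa [smod_iff_dvd hπ] at this
      exact (hd.trans (dvd_pow_self _ (by omega : p ≠ 0))).mul_right _
    have := dvd_add h2 h3
    simpa using this
  have hD := (inferInstance : IsHausdorff (maximalIdeal O) O).haus
    (x - ∑ i, ∑ j, (L i j) ^ p * π ^ (i : ℕ) * u j) (fun N => by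
      rw [smod_iff_dvd hπ, sub_zero]; exact key N)
  exact sub_eq_zero.mp hD
end aux4

/-- Let `K` be a complete discrete valued field of characteristic `p > 0`, realized as the
fraction field of a complete discrete valuation ring `O`, with residue field `k` satisfying
`[k : kᵖ] = pⁿ`. Then `[K : Kᵖ] = p^(n+1)`. -/
theorem rank_over_pPowers_of_complete_discrete (p n : ℕ) [Fact p.Prime]
    (O : Type) [CommRing O] [IsDomain O] [IsDiscreteValuationRing O]
    [IsAdicComplete (IsLocalRing.maximalIdeal O) O]
    (K : Type) [Field K] [Algebra O K] [IsFractionRing O K] [CharP K p]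
    [CharP (IsLocalRing.ResidueField O) p]
    (h : Module.rank (↥(RingHom.fieldRange (frobenius (IsLocalRing.ResidueField O) p)))
        (IsLocalRing.ResidueField O) = (p : Cardinal) ^ n) :
    Module.rank (↥(RingHom.fieldRange (frobenius K p))) K = (p : Cardinal) ^ (n + 1) := by
  classical
  have hp : p.Prime := Fact.out
  have hp0 : p ≠ 0 := hp.ne_zero
  haveI : CharP O p := RingHom.charP (algebraMap O K) (IsFractionRing.injective O K) p
  set k := IsLocalRing.ResidueField O
  set Fk := RingHom.fieldRange (frobenius k p) with hFk
  -- a basis of k over k^p indexed by `Fin (p ^ n)`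
  have hlt : Module.rank Fk k < Cardinal.aleph0 := by
    rw [h]
    have : ((p : Cardinal) ^ n) = ((p ^ n : ℕ) : Cardinal) := by push_cast; ring
    rw [this]
    exact Cardinal.nat_lt_aleph0 _
  haveI : Module.Finite Fk k := Module.rank_lt_aleph0_iff.mp hlt
  have hfr : Module.finrank Fk k = p ^ n := by
    apply Module.finrank_eq_of_rank_eq
    rw [h]; push_cast; ring
  let b : Module.Basis (Fin (p ^ n)) Fk k := Module.finBasisOfFinrankEq Fk k hfr
  choose u hu using fun j => IsLocalRing.residue_surjective (R := O) ((b j : k))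
  -- hypotheses H1 and H2 in terms of the lifted family
  have H1 : ∀ w : Fin (p ^ n) → k, ∑ j, (w j) ^ p * residue O (u j) = 0 → ∀ j, w j = 0 := by
    intro w hw j
    have hsum : ∑ j, (⟨frobenius k p (w j), ⟨w j, rfl⟩⟩ : Fk) • (b j : k) = 0 := by
      rw [← hw]
      refine Finset.sum_congr rfl fun j' _ => ?_
      rw [hu j']
      rfl
    have := Fintype.linearIndependent_iff.mp b.linearIndependent _ hsum j
    have hfz : frobenius k p (w j) = 0 := by
      simpa [Subtype.ext_iff] using this
    have : (w j) ^ p = 0 := hfz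
    exact pow_eq_zero_iff hp0 |>.mp this
  have H2 : ∀ x : k, ∃ w : Fin (p ^ n) → k, x = ∑ j, (w j) ^ p * residue O (u j) := by
    intro x
    have hx : x ∈ Submodule.span Fk (Set.range (b : Fin (p ^ n) → k)) := b.mem_span x
    rw [Submodule.mem_span_range_iff_exists_fun] at hx
    obtain ⟨cf, hcf⟩ := hx
    choose w hww using fun j => (cf j).2
    refine ⟨w, ?_⟩
    rw [← hcf]
    refine Finset.sum_congr rfl fun j _ => ?_
    rw [hu j]
    have : ((cf j : k)) = (w j) ^ p := (hww j).symm
    show (cf j : k) * (b j : k) = _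
    rw [this]
  obtain ⟨π, hπ⟩ := IsDiscreteValuationRing.exists_irreducible O
  set F := RingHom.fieldRange (frobenius K p) with hF
  set c : Fin p × Fin (p ^ n) → K := fun ij => algebraMap O K (π ^ (ij.1 : ℕ) * u ij.2) with hc
  have hinj := IsFractionRing.injective O K
  -- image of O lies in the span
  have spanO : ∀ z : O, algebraMap O K z ∈ Submodule.span F (Set.range c) := by
    intro z
    obtain ⟨L, hL⟩ := span_all u hπ H2 z
    rw [hL]
    rw [map_sum]
    refine Submodule.sum_mem _ fun i _ => ?_
    rw [map_sum]
    refine Submodule.sum_mem _ fun j _ => ?_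
    have : algebraMap O K ((L i j) ^ p * π ^ (i : ℕ) * u j)
        = (⟨frobenius K p (algebraMap O K (L i j)), ⟨_, rfl⟩⟩ : F) • c (i, j) := by
      show _ = (algebraMap O K (L i j)) ^ p * algebraMap O K (π ^ (i : ℕ) * u j)
      rw [← map_pow, ← map_mul, mul_assoc]
    rw [this]
    exact Submodule.smul_mem _ _ (Submodule.subset_span ⟨(i, j), rfl⟩)
  have hspan : ⊤ ≤ Submodule.span F (Set.range c) := by
    intro x _
    obtain ⟨a, dd, hdd, hx⟩ := IsFractionRing.div_surjective (A := O) x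
    have hdd0 : dd ≠ 0 := nonZeroDivisors.ne_zero hdd
    obtain ⟨m, w, hdw⟩ := IsDiscreteValuationRing.eq_unit_mul_pow_irreducible hdd0 hπ
    have hπK : algebraMap O K π ≠ 0 := fun hz =>
      hπ.ne_zero (IsFractionRing.to_map_eq_zero_iff.mp hz)
    set s : K := ((algebraMap O K π) ^ m)⁻¹ ^ p with hs
    have hsF : s ∈ F := ⟨((algebraMap O K π) ^ m)⁻¹, rfl⟩
    have hwK0 : algebraMap O K (w : O) ≠ 0 := fun hz =>
      Units.ne_zero w (IsFractionRing.to_map_eq_zero_iff.mp hz)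
    have h2 : algebraMap O K ((↑(w⁻¹) : O)) = (algebraMap O K (w : O))⁻¹ := by
      apply eq_inv_of_mul_eq_one_left
      rw [← map_mul]
      simp
    have hm : p * m - m + m = p * m :=
      Nat.sub_add_cancel (Nat.le_mul_of_pos_left m hp.pos)
    have hxy : x = s * algebraMap O K ((↑(w⁻¹) : O) * a * π ^ (p * m - m)) := by
      rw [← hx, hdw, map_mul, map_mul, map_mul, map_pow, map_pow, h2, hs]
      rw [div_eq_iff (mul_ne_zero hwK0 (pow_ne_zero _ hπK)), inv_pow, ← pow_mul]
      field_simp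
      rw [mul_comm m p]
      rw [mul_assoc, ← pow_add, hm]
    rw [hxy]
    have : s * algebraMap O K ((↑(w⁻¹) : O) * a * π ^ (p * m - m))
        = (⟨s, hsF⟩ : F) • algebraMap O K ((↑(w⁻¹) : O) * a * π ^ (p * m - m)) := rfl
    rw [this]
    exact Submodule.smul_mem _ _ (spanO _)
  -- assemble the basis
  have hind : LinearIndependent F c := by
    rw [Fintype.linearIndependent_iff]
    intro g hg
    choose wv hwv using fun ij => (g ij).2
    obtain ⟨den, hden⟩ := IsLocalization.exist_integer_multiples
      (nonZeroDivisors O) Finset.univ wv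
    choose av hav using fun ij => hden ij (Finset.mem_univ ij)
    have hden0K : algebraMap O K (den : O) ≠ 0 := fun hz =>
      nonZeroDivisors.ne_zero den.2 (IsFractionRing.to_map_eq_zero_iff.mp hz)
    have hsum0 : ∑ i, ∑ j, (av (i, j)) ^ p * π ^ (i : ℕ) * u j = 0 := by
      apply hinj
      rw [map_sum, map_zero]
      have : ∀ i : Fin p, ∀ j : Fin (p ^ n),
          algebraMap O K ((av (i, j)) ^ p * π ^ (i : ℕ) * u j)
          = (algebraMap O K (den : O)) ^ p * ((g (i, j) : K) * c (i, j)) := by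
        intro i j
        rw [map_mul, map_mul, map_pow, hav (i, j), Algebra.smul_def, ← hwv (i, j)]
        show (algebraMap O K (den : O) * wv (i, j)) ^ p * (algebraMap O K) (π ^ (i : ℕ)) *
            (algebraMap O K) (u j)
          = (algebraMap O K (den : O)) ^ p * ((wv (i, j)) ^ p * c (i, j))
        rw [hc]
        simp only [map_mul, map_pow, mul_pow]
        ring
      calc ∑ i : Fin p, algebraMap O K (∑ j, (av (i, j)) ^ p * π ^ (i : ℕ) * u j)
          = (algebraMap O K (den : O)) ^ p
            * ∑ ij : Fin p × Fin (p ^ n), (g ij : K) * c ij := by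
            rw [Fintype.sum_prod_type, Finset.mul_sum]
            refine Finset.sum_congr rfl fun i _ => ?_
            rw [map_sum, Finset.mul_sum]
            exact Finset.sum_congr rfl fun j _ => this i j
        _ = 0 := by
            have : ∑ ij : Fin p × Fin (p ^ n), (g ij : K) * c ij = 0 := by
              rw [← hg]
              exact Finset.sum_congr rfl fun ij _ => rfl
            rw [this, mul_zero]
    have hav0 : ∀ i j, av (i, j) = 0 :=
      li_zero u hp.pos hπ H1 (fun i j => av (i, j)) hsum0
    intro ij
    have : algebraMap O K (den : O) * wv ij = 0 := by
      rw [← Algebra.smul_def, ← hav ij]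
      show algebraMap O K (av ij) = 0
      rw [show av ij = av (ij.1, ij.2) from by rfl, hav0, map_zero]
    have hwv0 : wv ij = 0 := by
      rcases mul_eq_zero.mp this with hz | hz
      · exact absurd hz hden0K
      · exact hz
    have : (g ij : K) = 0 := by rw [← hwv ij, hwv0]; exact map_zero _
    exact Subtype.ext this
  let B : Module.Basis (Fin p × Fin (p ^ n)) F K := Module.Basis.mk hind hspan
  have := B.mk_eq_rank''
  rw [← this, Cardinal.mk_prod, Cardinal.mk_fin, Cardinal.mk_fin]
  simp only [Cardinal.lift_id]
  push_cast
  rw [pow_succ]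
  ring
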